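/- (Construction of the cut-off functions ψ_ε, formula (2.9)) Let n ≥ 1 and let S ⊆ ℝⁿ have zero 2-capacity. Then for every ε > 0 and every open set B ⊇ S there exists a Lipschitz continuous function ψ : ℝⁿ → ℝ such that: 0 ≤ ψ ≤ 1 on ℝⁿ; ψ = 0 on an open neighborhood of S; ψ = 1 on ℝⁿ \ B; and ∫_{ℝⁿ} ‖Dψ(x)‖² dx ≤ 4ε, where Dψ(x) denotes the derivative of ψ at x (which exists for almost every x, ψ being Lipschitz), interpreted as 0 at points of non-differentiability. -/

import Mathlib

open MeasureTheory Set

noncomputable section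

/-- A set `S ⊆ ℝⁿ` has zero 2-capacity: for every `ε > 0` and every open `B ⊇ S` there is a
smooth compactly supported `φ` with support in `B`, `φ ≥ 1` on a neighborhood of `S`, and
`∫ ‖∇φ‖² < ε`. -/
def ZeroCap2 {n : ℕ} (S : Set (EuclideanSpace ℝ (Fin n))) : Prop :=
  ∀ ε > (0:ℝ), ∀ B : Set (EuclideanSpace ℝ (Fin n)), IsOpen B → S ⊆ B →
    ∃ φ : EuclideanSpace ℝ (Fin n) → ℝ, ContDiff ℝ (⊤ : ℕ∞) φ ∧ HasCompactSupport φ ∧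
      tsupport φ ⊆ B ∧ (∃ V, IsOpen V ∧ S ⊆ V ∧ ∀ x ∈ V, 1 ≤ φ x) ∧
      ∫ x, ‖gradient φ x‖ ^ 2 < ε

/-- The truncation `T`. -/
def Tcut (s : ℝ) : ℝ := max 0 (min 1 (1 - 2*s))

lemma Tcut_lip (a b : ℝ) : |Tcut a - Tcut b| ≤ 2 * |a - b| := by
  unfold Tcut
  calc |max 0 (min 1 (1-2*a)) - max 0 (min 1 (1-2*b))|
      ≤ max |(0:ℝ) - 0| |min 1 (1-2*a) - min 1 (1-2*b)| := abs_max_sub_max_le_max _ _ _ _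
    _ ≤ max |(0:ℝ) - 0| (max |(1:ℝ)-1| |(1-2*a) - (1-2*b)|) := by
        exact max_le_max le_rfl (abs_min_sub_min_le_max _ _ _ _)
    _ ≤ 2 * |a - b| := by
        have h : |(1-2*a) - (1-2*b)| = 2 * |a - b| := by
          rw [show (1-2*a) - (1-2*b) = 2*(b-a) by ring, abs_mul, abs_sub_comm b a]
          norm_num
        rw [h]
        have : (0:ℝ) ≤ 2 * |a - b| := by positivity
        simp [this]

lemma Tcut_nonneg (s : ℝ) : 0 ≤ Tcut s := le_max_left _ _

lemma Tcut_le_one (s : ℝ) : Tcut s ≤ 1 := by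
  unfold Tcut
  exact max_le zero_le_one (min_le_left _ _)

lemma Tcut_of_one_le {s : ℝ} (h : 1 ≤ s) : Tcut s = 0 := by
  unfold Tcut
  have : (1 - 2*s : ℝ) ≤ 0 := by linarith
  rw [max_eq_left]
  exact (min_le_right _ _).trans this

lemma Tcut_zero : Tcut 0 = 1 := by norm_num [Tcut]

/-- Construction of the cut-off functions `ψ_ε` (formula (2.9)): if `S` has zero 2-capacity,
then for every `ε > 0` and every open `B ⊇ S` there is a Lipschitz function `ψ` with
`0 ≤ ψ ≤ 1`, `ψ = 0` on an open neighborhood of `S`, `ψ = 1` outside `B`, and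
`∫ ‖Dψ‖² ≤ 4ε` (`Dψ = fderiv ℝ ψ`, which is `0` by convention at points of
non-differentiability). -/
theorem cutoff_construction
    (n : ℕ) (hn : 1 ≤ n)
    (S : Set (EuclideanSpace ℝ (Fin n))) (hS : ZeroCap2 S) :
    ∀ ε > (0:ℝ), ∀ B : Set (EuclideanSpace ℝ (Fin n)), IsOpen B → S ⊆ B →
      ∃ ψ : EuclideanSpace ℝ (Fin n) → ℝ,
        (∃ K, LipschitzWith K ψ) ∧
        (∀ x, 0 ≤ ψ x ∧ ψ x ≤ 1) ∧
        (∃ V, IsOpen V ∧ S ⊆ V ∧ ∀ x ∈ V, ψ x = 0) ∧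
        (∀ x ∉ B, ψ x = 1) ∧
        ∫⁻ x, ENNReal.ofReal (‖fderiv ℝ ψ x‖ ^ 2) ≤ ENNReal.ofReal (4 * ε) := by
  intro ε hε B hB hSB
  obtain ⟨φ, hφ, hcs, hsupp, ⟨V, hVopen, hSV, hV1⟩, hint⟩ := hS ε hε B hB hSB
  set ψ : EuclideanSpace ℝ (Fin n) → ℝ := fun x => Tcut (φ x) with hψdef
  have hφdiff : Differentiable ℝ φ := hφ.differentiable (by norm_num)
  -- key pointwise bound
  have key : ∀ x, ‖fderiv ℝ ψ x‖ ≤ 2 * ‖fderiv ℝ φ x‖ := by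
    intro x
    refine le_of_forall_pos_le_add ?_
    intro δ hδ
    have hd : HasFDerivAt φ (fderiv ℝ φ x) x := (hφdiff x).hasFDerivAt
    have hev : ∀ᶠ y in nhds x, ‖ψ y - ψ x‖ ≤ (2 * ‖fderiv ℝ φ x‖ + δ) * ‖y - x‖ := by
      have hlo := hd.isLittleO.def (show (0:ℝ) < δ/2 by linarith)
      filter_upwards [hlo] with y hy
      have h1 : ‖φ y - φ x‖ ≤ ‖fderiv ℝ φ x‖ * ‖y - x‖ + (δ/2) * ‖y - x‖ := by
        have := (fderiv ℝ φ x).le_opNorm (y - x)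
        calc ‖φ y - φ x‖ ≤ ‖φ y - φ x - fderiv ℝ φ x (y - x)‖ + ‖fderiv ℝ φ x (y - x)‖ := by
              simpa using norm_add_le (φ y - φ x - fderiv ℝ φ x (y - x)) (fderiv ℝ φ x (y - x))
          _ ≤ (δ/2) * ‖y - x‖ + ‖fderiv ℝ φ x‖ * ‖y - x‖ := add_le_add hy this
          _ = ‖fderiv ℝ φ x‖ * ‖y - x‖ + (δ/2) * ‖y - x‖ := by ring
      have h2 : ‖ψ y - ψ x‖ ≤ 2 * ‖φ y - φ x‖ := by
        simpa [Real.norm_eq_abs] using Tcut_lip (φ y) (φ x)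
      calc ‖ψ y - ψ x‖ ≤ 2 * ‖φ y - φ x‖ := h2
        _ ≤ 2 * (‖fderiv ℝ φ x‖ * ‖y - x‖ + (δ/2) * ‖y - x‖) := by linarith
        _ = (2 * ‖fderiv ℝ φ x‖ + δ) * ‖y - x‖ := by ring
    exact norm_fderiv_le_of_lip' ℝ
      (by positivity) hev
  refine ⟨ψ, ?_, ?_, ?_, ?_, ?_⟩
  · -- Lipschitz
    obtain ⟨K, hK⟩ := hφ.lipschitzWith_of_hasCompactSupport hcs (by simp)
    refine ⟨2 * K, ?_⟩
    have : LipschitzWith 2 Tcut := by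
      rw [lipschitzWith_iff_dist_le_mul]
      intro a b
      simpa [Real.dist_eq] using Tcut_lip a b
    exact this.comp hK
  · exact fun x => ⟨Tcut_nonneg _, Tcut_le_one _⟩
  · exact ⟨V, hVopen, hSV, fun x hx => Tcut_of_one_le (hV1 x hx)⟩
  · intro x hx
    have : φ x = 0 := by
      by_contra h
      exact hx (hsupp (subset_tsupport φ h))
    simp [hψdef, this, Tcut_zero]
  · -- the integral estimate
    have hgradnorm : ∀ x, ‖gradient φ x‖ = ‖fderiv ℝ φ x‖ := by
      intro x
      simp [gradient]
    have hcont : Continuous fun x => fderiv ℝ φ x := hφ.continuous_fderiv (by norm_num)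
    have hcs' : HasCompactSupport fun x => 4 * ‖fderiv ℝ φ x‖ ^ 2 := by
      have := (hcs.fderiv ℝ)
      exact this.comp_left (g := fun L : _ →L[ℝ] ℝ => 4 * ‖L‖^2) (by simp)
    have hintg : Integrable (fun x => 4 * ‖fderiv ℝ φ x‖ ^ 2) := by
      exact (Continuous.mul continuous_const ((hcont.norm).pow 2)).integrable_of_hasCompactSupport hcs'
    calc ∫⁻ x, ENNReal.ofReal (‖fderiv ℝ ψ x‖ ^ 2)
        ≤ ∫⁻ x, ENNReal.ofReal (4 * ‖fderiv ℝ φ x‖ ^ 2) := by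
          refine lintegral_mono fun x => ENNReal.ofReal_le_ofReal ?_
          have := key x
          nlinarith [norm_nonneg (fderiv ℝ ψ x), norm_nonneg (fderiv ℝ φ x)]
      _ = ENNReal.ofReal (∫ x, 4 * ‖fderiv ℝ φ x‖ ^ 2) := by
          rw [← ofReal_integral_eq_lintegral_ofReal hintg]
          exact Filter.Eventually.of_forall fun x => by positivity
      _ ≤ ENNReal.ofReal (4 * ε) := by
          refine ENNReal.ofReal_le_ofReal ?_
          have : ∫ x, 4 * ‖fderiv ℝ φ x‖ ^ 2 = 4 * ∫ x, ‖gradient φ x‖ ^ 2 := by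
            rw [integral_const_mul]
            congr 1
            exact integral_congr_ae (Filter.Eventually.of_forall fun x => by simp [hgradnorm x])
          rw [this]
          linarith
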